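/- Let ν be a partition with ℓ removable corners, of weights R_1,…,R_ℓ, and ℓ+1 addable corners, of weights A_0,…,A_ℓ; set d_j = (1/A_j)·∏_{i=1}^{ℓ}(1 − qt·R_i/A_j) / ∏_{0≤i≤ℓ, i≠j}(1 − A_i/A_j) and P(y) = ∏_{i=1}^{ℓ}(1 − qt·R_i·y)/∏_{j=0}^{ℓ}(1 − A_j·y) ∈ ℚ(q,t)[[y]]. Then for every integer k ≥ 1: Σ_{j=0}^{ℓ} d_j·A_j^k·(B_ν + A_j) = B_ν·([y^{k−1}]P) + ([y^k]P), where [y^m]P denotes the coefficient of y^m in P. (This is the identity Σ_{γ←ν} d_{γν}(T_γ/T_ν)^k·B_γ = (−1)^{k−1}B_ν·e_{k−1}[D_ν] + (−1)^k·e_k[D_ν] used in the proof of the eigenoperator theorem for Q_{m,0}.) -/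

import Mathlib

open scoped Classical
open PowerSeries

noncomputable section

abbrev K := FractionRing (MvPolynomial (Fin 2) ℚ)

def q : K := algebraMap (MvPolynomial (Fin 2) ℚ) K (MvPolynomial.X 0)
def t : K := algebraMap (MvPolynomial (Fin 2) ℚ) K (MvPolynomial.X 1)

/-- the weight of a cell `(i,j)` (row `i`, column `j`) is `t^i * q^j` -/
def w (c : ℕ × ℕ) : K := t ^ c.1 * q ^ c.2

/-- `B_μ = Σ_{c ∈ μ} w(c)` -/
def Bsum (μ : YoungDiagram) : K := ∑ c ∈ μ.cells, w c

/-- a removable corner: a cell of `μ` whose removal leaves a Young diagram -/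
def IsRemovable (μ : YoungDiagram) (c : ℕ × ℕ) : Prop :=
  c ∈ μ ∧ IsLowerSet (↑(μ.cells.erase c) : Set (ℕ × ℕ))

/-- an addable corner: a cell not in `μ` whose addition gives a Young diagram -/
def IsAddable (μ : YoungDiagram) (c : ℕ × ℕ) : Prop :=
  c ∉ μ ∧ IsLowerSet (↑(insert c μ.cells) : Set (ℕ × ℕ))

/-- the arm of a cell: number of cells of `μ` strictly east of it in its row -/
def arm (μ : YoungDiagram) (c : ℕ × ℕ) : ℕ :=
  (μ.cells.filter fun d => d.1 = c.1 ∧ c.2 < d.2).card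

/-- the leg of a cell: number of cells of `μ` strictly north of it in its column -/
def leg (μ : YoungDiagram) (c : ℕ × ℕ) : ℕ :=
  (μ.cells.filter fun d => d.2 = c.2 ∧ c.1 < d.1).card

/-! ### Auxiliary lemmas -/

lemma w_eq_algebraMap (c : ℕ × ℕ) :
    w c = algebraMap (MvPolynomial (Fin 2) ℚ) K
      (MvPolynomial.monomial (Finsupp.single 1 c.1 + Finsupp.single 0 c.2) 1) := by
  rw [w, q, t, ← map_pow, ← map_pow, ← map_mul]
  congr 1
  rw [MvPolynomial.X_pow_eq_monomial, MvPolynomial.X_pow_eq_monomial,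
    MvPolynomial.monomial_mul, one_mul]

lemma w_injective : Function.Injective w := by
  intro c c' h
  rw [w_eq_algebraMap, w_eq_algebraMap] at h
  have h2 := IsFractionRing.injective (MvPolynomial (Fin 2) ℚ) K h
  rw [MvPolynomial.monomial_eq_monomial_iff] at h2
  rcases h2 with ⟨hs, -⟩ | ⟨h1, -⟩
  · have e1 := DFunLike.congr_fun hs (1 : Fin 2)
    have e0 := DFunLike.congr_fun hs (0 : Fin 2)
    simp [Finsupp.single_apply] at e1 e0
    exact Prod.ext e1 e0
  · exact absurd h1 one_ne_zero

lemma q_ne_zero : q ≠ 0 := by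
  intro h
  apply MvPolynomial.X_ne_zero (R := ℚ) (0 : Fin 2)
  apply IsFractionRing.injective (MvPolynomial (Fin 2) ℚ) K
  rw [map_zero]; exact h

lemma t_ne_zero : t ≠ 0 := by
  intro h
  apply MvPolynomial.X_ne_zero (R := ℚ) (1 : Fin 2)
  apply IsFractionRing.injective (MvPolynomial (Fin 2) ℚ) K
  rw [map_zero]; exact h

lemma w_ne_zero (c : ℕ × ℕ) : w c ≠ 0 :=
  mul_ne_zero (pow_ne_zero _ t_ne_zero) (pow_ne_zero _ q_ne_zero)

lemma removable_rowLen {ν : YoungDiagram} {c : ℕ × ℕ} (h : IsRemovable ν c) :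
    ν.rowLen c.1 = c.2 + 1 ∧ ν.rowLen (c.1 + 1) ≤ c.2 := by
  obtain ⟨i, j⟩ := c
  obtain ⟨hm, hl⟩ := h
  dsimp only
  have hmem : j < ν.rowLen i := YoungDiagram.mem_iff_lt_rowLen.mp hm
  have hnot : ∀ c' : ℕ × ℕ, (i, j) ≤ c' → c' ≠ (i, j) → c' ∉ ν := by
    intro c' hle hne hmem'
    have h1 : c' ∈ (↑(ν.cells.erase (i, j)) : Set (ℕ × ℕ)) := by
      rw [Finset.mem_coe, Finset.mem_erase]
      exact ⟨hne, (YoungDiagram.mem_cells _).mpr hmem'⟩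
    have h2 := hl hle h1
    rw [Finset.mem_coe, Finset.mem_erase] at h2
    exact h2.1 rfl
  constructor
  · have := hnot (i, j + 1) (Prod.mk_le_mk.mpr ⟨le_rfl, Nat.le_succ j⟩) (by simp)
    rw [YoungDiagram.mem_iff_lt_rowLen] at this
    omega
  · have := hnot (i + 1, j) (Prod.mk_le_mk.mpr ⟨Nat.le_succ i, le_rfl⟩) (by simp)
    rw [YoungDiagram.mem_iff_lt_rowLen] at this
    omega

lemma addable_mk (ν : YoungDiagram) (i : ℕ) (hlt : ∀ x, x < i → ν.rowLen i < ν.rowLen x) :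
    IsAddable ν (i, ν.rowLen i) := by
  constructor
  · rw [YoungDiagram.mem_iff_lt_rowLen]; exact lt_irrefl _
  · intro a b hba ha
    simp only [Finset.coe_insert, Set.mem_insert_iff, Finset.mem_coe,
      YoungDiagram.mem_cells] at ha ⊢
    rcases ha with rfl | ha
    · by_cases hb1 : b = (i, ν.rowLen i)
      · left; exact hb1
      · right
        obtain ⟨b1, b2⟩ := b
        rw [YoungDiagram.mem_iff_lt_rowLen]
        rcases Nat.lt_or_ge b2 (ν.rowLen i) with hy | hy
        · exact lt_of_lt_of_le hy (ν.rowLen_anti _ _ hba.1)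
        · have hb2 : b2 = ν.rowLen i := le_antisymm hba.2 hy
          have hb1' : b1 < i := lt_of_le_of_ne hba.1 (fun h => hb1 (Prod.ext h hb2))
          rw [hb2]; exact hlt _ hb1'
    · right; exact ν.isLowerSet hba ha

lemma card_rem_lt_card_add (ν : YoungDiagram) (Rem Add : Finset (ℕ × ℕ))
    (hRem : ∀ x, x ∈ Rem ↔ IsRemovable ν x)
    (hAdd : ∀ x, x ∈ Add ↔ IsAddable ν x) : Rem.card < Add.card := by
  set f : ℕ × ℕ → ℕ × ℕ := fun c => (c.1 + 1, ν.rowLen (c.1 + 1)) with hf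
  have hmaps : ∀ c ∈ Rem, f c ∈ Add := by
    intro c hc
    have h := removable_rowLen ((hRem c).mp hc)
    rw [hAdd]
    apply addable_mk
    intro x hx
    have hx' : x ≤ c.1 := Nat.lt_succ_iff.mp hx
    calc ν.rowLen (c.1 + 1) ≤ c.2 := h.2
      _ < c.2 + 1 := Nat.lt_succ_self _
      _ = ν.rowLen c.1 := h.1.symm
      _ ≤ ν.rowLen x := ν.rowLen_anti _ _ hx'
  have hinj : Set.InjOn f Rem := by
    intro c hc c' hc' heq
    have h := removable_rowLen ((hRem c).mp hc)
    have h' := removable_rowLen ((hRem c').mp hc')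
    have h1 : c.1 = c'.1 := by
      have := congrArg Prod.fst heq
      simpa [hf] using this
    have e1 : ν.rowLen c.1 = c.2 + 1 := h.1
    have e2 : ν.rowLen c.1 = c'.2 + 1 := by rw [h1]; exact h'.1
    exact Prod.ext h1 (by omega)
  have hssub : Rem.image f ⊂ Add := by
    constructor
    · intro x hx
      obtain ⟨c, hc, rfl⟩ := Finset.mem_image.mp hx
      exact hmaps c hc
    · intro hsub
      have h0 : (0, ν.rowLen 0) ∈ Add :=
        (hAdd _).mpr (addable_mk ν 0 (fun x hx => absurd hx (Nat.not_lt_zero x)))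
      obtain ⟨c, -, heq⟩ := Finset.mem_image.mp (hsub h0)
      have := congrArg Prod.fst heq
      simp [hf] at this
  calc Rem.card = (Rem.image f).card := (Finset.card_image_of_injOn hinj).symm
    _ < Add.card := Finset.card_lt_card hssub

lemma one_sub_mul_geom (a : K) :
    (1 - C a * X) * PowerSeries.mk (fun n => a ^ n) = 1 := by
  ext n
  rw [sub_mul, one_mul, mul_assoc, map_sub, PowerSeries.coeff_C_mul]
  cases n with
  | zero => simp
  | succ m =>
    rw [PowerSeries.coeff_succ_X_mul]
    simp only [PowerSeries.coeff_mk, PowerSeries.coeff_one, Nat.succ_ne_zero, if_false]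
    rw [pow_succ]
    ring

lemma natDegree_one_sub_C_mul_X_le (u : K) :
    (1 - Polynomial.C u * Polynomial.X).natDegree ≤ 1 := by
  refine le_trans (Polynomial.natDegree_sub_le _ _) (max_le (by simp) ?_)
  refine le_trans Polynomial.natDegree_mul_le ?_
  simp only [Polynomial.natDegree_C, zero_add]
  exact Polynomial.natDegree_X_le

lemma aux_alg (x Nv Dv : K) (hx : x ≠ 0) (hDv : Dv ≠ 0) :
    x⁻¹ * Nv / Dv * x * Dv = Nv := by
  field_simp

set_option maxHeartbeats 1000000 in
/-- the identity
`Σ_j d_j·A_j^k·(B_ν + A_j) = B_ν·[y^{k−1}]P + [y^k]P`, i.e.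
`Σ_{γ←ν} d_{γν}(T_γ/T_ν)^k·B_γ = (−1)^{k−1}B_ν·e_{k−1}[D_ν] + (−1)^k·e_k[D_ν]`. -/
theorem stmt_12 (ν : YoungDiagram) (Rem Add : Finset (ℕ × ℕ))
    (hRem : ∀ x, x ∈ Rem ↔ IsRemovable ν x)
    (hAdd : ∀ x, x ∈ Add ↔ IsAddable ν x)
    (d : (ℕ × ℕ) → K)
    (hd : ∀ a ∈ Add, d a =
      (w a)⁻¹ * (∏ r ∈ Rem, (1 - q * t * w r / w a)) /
        ∏ a' ∈ Add.erase a, (1 - w a' / w a))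
    (P : PowerSeries K)
    (hP : P = (∏ r ∈ Rem, (1 - C (q * t * w r) * X)) *
      (∏ a ∈ Add, (1 - C (w a) * X))⁻¹) :
    ∀ k : ℕ, 1 ≤ k →
      (∑ a ∈ Add, d a * w a ^ k * (Bsum ν + w a)) =
        Bsum ν * coeff (k - 1) P + coeff k P := by
  have hw0 : ∀ c, w c ≠ 0 := w_ne_zero
  have hwinj : Function.Injective w := w_injective
  have hcard : Rem.card < Add.card := card_rem_lt_card_add ν Rem Add hRem hAdd
  have hDen : ∀ a ∈ Add, (∏ a' ∈ Add.erase a, (1 - w a' / w a)) ≠ 0 := by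
    intro a ha
    apply Finset.prod_ne_zero_iff.mpr
    intro a' ha' hzero
    rw [sub_eq_zero] at hzero
    exact (Finset.mem_erase.mp ha').1
      (hwinj ((div_eq_one_iff_eq (hw0 a)).mp hzero.symm))
  have hkey : ∀ a ∈ Add, d a * w a * ∏ a' ∈ Add.erase a, (1 - w a' / w a)
      = ∏ r ∈ Rem, (1 - q * t * w r / w a) := by
    intro a ha
    rw [hd a ha]
    exact aux_alg _ _ _ (hw0 a) (hDen a ha)
  -- the polynomial identity via Lagrange interpolation
  set Np : Polynomial K := ∏ r ∈ Rem, (1 - Polynomial.C (q * t * w r) * Polynomial.X) with hNp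
  set Sp : Polynomial K := ∑ a ∈ Add, Polynomial.C (d a * w a) *
      ∏ a' ∈ Add.erase a, (1 - Polynomial.C (w a') * Polynomial.X) with hSp
  have hNS : Np = Sp := by
    rw [← sub_eq_zero]
    apply Polynomial.eq_zero_of_natDegree_lt_card_of_eval_eq_zero' _
      (Add.image fun a => (w a)⁻¹)
    · intro x hx
      obtain ⟨b, hb, rfl⟩ := Finset.mem_image.mp hx
      rw [Polynomial.eval_sub, sub_eq_zero, hNp, hSp, Polynomial.eval_prod,
        Polynomial.eval_finset_sum]
      simp only [Polynomial.eval_mul, Polynomial.eval_sub, Polynomial.eval_one,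
        Polynomial.eval_C, Polynomial.eval_X, Polynomial.eval_prod]
      have e1 : ∀ u : K, u * (w b)⁻¹ = u / w b := fun u => (div_eq_mul_inv u (w b)).symm
      simp only [e1]
      rw [Finset.sum_eq_single b]
      · exact (hkey b hb).symm
      · intro a' ha' hne
        apply mul_eq_zero_of_right
        apply Finset.prod_eq_zero (Finset.mem_erase.mpr ⟨Ne.symm hne, hb⟩)
        rw [div_self (hw0 b), sub_self]
      · intro h; exact absurd hb h
    · rw [Finset.card_image_of_injOn (fun a _ b _ h => hwinj (inv_injective h))]
      apply lt_of_le_of_lt (Polynomial.natDegree_sub_le _ _)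
      rw [max_lt_iff]
      have hb1 : Np.natDegree ≤ Rem.card := by
        rw [hNp]
        apply le_trans (Polynomial.natDegree_prod_le _ _)
        apply le_trans (Finset.sum_le_card_nsmul _ _ 1
          (fun r _ => natDegree_one_sub_C_mul_X_le _))
        simp
      have hb2 : Sp.natDegree ≤ Add.card - 1 := by
        rw [hSp]
        apply Polynomial.natDegree_sum_le_of_forall_le
        intro a ha
        apply le_trans Polynomial.natDegree_mul_le
        rw [Polynomial.natDegree_C, zero_add]
        apply le_trans (Polynomial.natDegree_prod_le _ _)
        apply le_trans (Finset.sum_le_card_nsmul _ _ 1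
          (fun a' _ => natDegree_one_sub_C_mul_X_le _))
        simp [Finset.card_erase_of_mem ha]
      have hpos : 0 < Add.card := lt_of_le_of_lt (Nat.zero_le _) hcard
      exact ⟨by omega, by omega⟩
  -- transfer to power series
  set D : PowerSeries K := ∏ a ∈ Add, (1 - C (w a) * X) with hD
  set N : PowerSeries K := ∏ r ∈ Rem, (1 - C (q * t * w r) * X) with hN
  have hDconst : constantCoeff D = 1 := by
    rw [hD, map_prod]
    apply Finset.prod_eq_one
    intro a _
    simp
  have hDne : D ≠ 0 := fun h => by simp [h] at hDconst
  have hPD : P * D = N := by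
    rw [hP, mul_assoc, PowerSeries.inv_mul_cancel _ (by rw [hDconst]; exact one_ne_zero),
      mul_one]
  set S : PowerSeries K := ∑ a ∈ Add, C (d a * w a) * PowerSeries.mk (fun n => w a ^ n)
    with hS
  have hSD : S * D = N := by
    rw [hS, Finset.sum_mul]
    have step : ∀ a ∈ Add, (C (d a * w a) * PowerSeries.mk fun n => w a ^ n) * D
        = C (d a * w a) * ∏ a' ∈ Add.erase a, (1 - C (w a') * X) := by
      intro a ha
      rw [hD, ← Finset.mul_prod_erase _ _ ha, mul_assoc]
      congr 1
      rw [← mul_assoc, mul_comm (PowerSeries.mk _), one_sub_mul_geom, one_mul]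
    rw [Finset.sum_congr rfl step]
    have himg := congrArg (Polynomial.coeToPowerSeries.ringHom (R := K)) hNS
    rw [hNp, hSp] at himg
    simp only [map_prod, map_sum, map_mul, map_sub, map_one,
      Polynomial.coeToPowerSeries.ringHom_apply, Polynomial.coe_C, Polynomial.coe_X] at himg
    rw [hN]
    simp only [map_mul]
    exact himg.symm
  have hPS : P = S := mul_right_cancel₀ hDne (by rw [hPD, hSD])
  have hcoeff : ∀ m, (coeff m) P = ∑ a ∈ Add, d a * w a * w a ^ m := by
    intro m
    rw [hPS, hS, map_sum]
    apply Finset.sum_congr rfl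
    intro a _
    rw [PowerSeries.coeff_C_mul, PowerSeries.coeff_mk]
  intro k hk
  rw [hcoeff, hcoeff, Finset.mul_sum, ← Finset.sum_add_distrib]
  apply Finset.sum_congr rfl
  intro a _
  have hpow : w a * w a ^ (k - 1) = w a ^ k := by
    rw [← pow_succ']
    congr 1
    omega
  calc d a * w a ^ k * (Bsum ν + w a)
      = Bsum ν * (d a * (w a * w a ^ (k - 1))) + d a * w a * w a ^ k := by rw [hpow]; ring
    _ = Bsum ν * (d a * w a * w a ^ (k - 1)) + d a * w a * w a ^ k := by ring

end
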